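/- Let a, a′ > 0, a″ ≥ 0, β > 0, p ∈ (0,1], q ∈ [0,1), C ≥ 0, and let h_max ≥ 1 be an integer. On a probability space, let H take values in {1, …, h_max} with P(H = h) = C·q^(h−1); let (K_i)_{i≥1} be i.i.d. geometric random variables on the positive integers with parameter p, independent of H; let g = Σ_{i=1}^{H} K_i; let f be exponentially distributed with rate β, independent of (H, (K_i)); and define c = a·f + a′·g + a″. Then the law of c is absolutely continuous with respect to Lebesgue measure with density f_c(x) = (C/a) · Σ_{k=1}^{⌊(x−a″)/a′⌋} [ β·e^(−β(x−a″−a′k)/a) · Σ_{h=1}^{min(k, h_max)} C(k−1, h−1) p^h (1−p)^(k−h) q^(h−1) ] for x ≥ a′ + a″, and f_c(x) = 0 for x < a′ + a″. -/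

import Mathlib

open MeasureTheory ProbabilityTheory Real
open scoped ENNReal

lemma choose_sum_aux (h k : ℕ) (hh : 1 ≤ h) :
    ∑ j ∈ Finset.Icc h (k-1), (j-1).choose (h-1) = (k-1).choose h := by
  rcases Nat.lt_or_ge k 2 with hk2 | hk2
  · interval_cases k <;> simp [Finset.Icc_eq_empty_of_lt (by omega : (0:ℕ) < h),
      Nat.choose_eq_zero_of_lt (by omega : 0 < h)]
  · have := Nat.sum_Icc_choose (k-2) (h-1)
    rw [show k - 2 + 1 = k - 1 by omega, show h - 1 + 1 = h by omega] at this
    rw [← this]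
    apply Finset.sum_nbij' (i := fun j => j - 1) (j := fun m => m + 1)
    all_goals intros; simp only [Finset.mem_Icc] at *
    all_goals first | rfl | omega

lemma nb_conv (p : ℝ) (h k : ℕ) (hh : 1 ≤ h) (hk : 1 ≤ k) :
    ∑ j ∈ Finset.Icc 1 (k-1), ((j-1).choose (h-1) : ℝ) * p^h * (1-p)^(j-h) *
      (p * (1-p)^(k-j-1))
    = ((k-1).choose h : ℝ) * p^(h+1) * (1-p)^(k-(h+1)) := by
  rw [← Finset.sum_subset (s₁ := Finset.Icc h (k-1))
      (by intro j hj; simp only [Finset.mem_Icc] at *; omega)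
      (by intro j hj hj'; simp only [Finset.mem_Icc] at *
          have : j - 1 < h - 1 := by omega
          rw [Nat.choose_eq_zero_of_lt this]; push_cast; ring)]
  have heq : ∀ j ∈ Finset.Icc h (k-1),
      ((j-1).choose (h-1) : ℝ) * p^h * (1-p)^(j-h) * (p * (1-p)^(k-j-1))
      = ((j-1).choose (h-1) : ℝ) * (p^(h+1) * (1-p)^(k-(h+1))) := by
    intro j hj; simp only [Finset.mem_Icc] at hj
    rw [show k - (h+1) = (j - h) + (k - j - 1) by omega, pow_add]
    ring
  rw [Finset.sum_congr rfl heq, ← Finset.sum_mul, ← Nat.cast_sum, choose_sum_aux h k hh]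
  ring

lemma affine_lintegral (d : ℝ → ℝ≥0∞) (hd : Measurable d) {a b : ℝ} (ha : 0 < a)
    {s : Set ℝ} (hs : MeasurableSet s) :
    ∫⁻ x in (fun x => a*x+b) ⁻¹' s, d x
      = ∫⁻ y in s, ENNReal.ofReal (1/a) * d ((y-b)/a) := by
  have hφ : Measurable fun x : ℝ => a*x+b := by fun_prop
  have hmap : Measure.map (fun x : ℝ => a*x+b) volume
      = ENNReal.ofReal (1/a) • volume := by
    have h1 : (fun x : ℝ => a*x+b) = (fun x : ℝ => x + b) ∘ (fun x : ℝ => a*x) := rfl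
    rw [h1, ← Measure.map_map (by fun_prop) (by fun_prop),
      Real.map_volume_mul_left (ne_of_gt ha), Measure.map_smul,
      map_add_right_eq_self volume b]
    congr 1
    rw [abs_of_pos (inv_pos.mpr ha), one_div]
  have hF : Measurable fun y : ℝ => d ((y-b)/a) := by fun_prop
  calc ∫⁻ x in (fun x => a*x+b) ⁻¹' s, d x
      = ∫⁻ x, s.indicator (fun y => d ((y-b)/a)) (a*x+b) ∂volume := by
        rw [← lintegral_indicator (hφ hs) _]
        congr 1; funext x
        by_cases hx : a*x+b ∈ s
        · rw [Set.indicator_of_mem hx, Set.indicator_of_mem (by exact hx)]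
          congr 1; field_simp; ring
        · rw [Set.indicator_of_notMem hx, Set.indicator_of_notMem (by exact hx)]
    _ = ∫⁻ y, s.indicator (fun y => d ((y-b)/a)) y ∂(Measure.map (fun x => a*x+b) volume) := by
        rw [lintegral_map (hF.indicator hs) hφ]
    _ = ∫⁻ y in s, ENNReal.ofReal (1/a) * d ((y-b)/a) := by
        rw [hmap, lintegral_smul_measure, lintegral_indicator hs _, smul_eq_mul,
          ← lintegral_const_mul _ hF]

lemma add_pmf {Ω : Type*} [MeasurableSpace Ω] (μ : Measure Ω) (A B : Ω → ℕ)
    (hA : Measurable A) (hB : Measurable B) (hAB : IndepFun A B μ) (k : ℕ) :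
    μ {ω | A ω + B ω = k}
      = ∑ j ∈ Finset.range (k+1), μ {ω | A ω = j} * μ {ω | B ω = k - j} := by
  have hset : {ω | A ω + B ω = k}
      = ⋃ j ∈ (Finset.range (k+1) : Finset ℕ), (A ⁻¹' {j} ∩ B ⁻¹' {k - j}) := by
    ext ω
    simp only [Set.mem_setOf_eq, Set.mem_iUnion, Finset.mem_range, Set.mem_inter_iff,
      Set.mem_preimage, Set.mem_singleton_iff, exists_prop]
    constructor
    · intro hω; exact ⟨A ω, by omega, rfl, by omega⟩
    · rintro ⟨j, hj, h1, h2⟩; omega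
  rw [hset, measure_biUnion_finset ?_ ?_]
  · refine Finset.sum_congr rfl fun j hj => ?_
    exact hAB.measure_inter_preimage_eq_mul _ _ (measurableSet_singleton j)
      (measurableSet_singleton _)
  · intro i hi j hj hij
    refine Set.disjoint_left.mpr fun ω hωi hωj => ?_
    exact hij (hωi.1.symm.trans hωj.1)
  · intro j hj
    exact (hA (measurableSet_singleton _)).inter (hB (measurableSet_singleton _))

lemma geom_total (p : ℝ) (hp0 : 0 < p) (hp1 : p ≤ 1) :
    ∑' (n : ℕ), ENNReal.ofReal (p * (1-p)^n) = 1 := by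
  rw [← ENNReal.ofReal_tsum_of_nonneg
    (fun n => mul_nonneg hp0.le (pow_nonneg (by linarith) n))
    ((summable_geometric_of_lt_one (by linarith) (by linarith)).mul_left p),
    tsum_mul_left, tsum_geometric_of_lt_one (by linarith) (by linarith)]
  rw [show (1 : ℝ) - (1 - p) = p by ring, mul_inv_cancel₀ hp0.ne']
  exact ENNReal.ofReal_one

lemma K_zero {Ω : Type*} [MeasurableSpace Ω] (μ : Measure Ω) [IsProbabilityMeasure μ]
    (p : ℝ) (hp0 : 0 < p) (hp1 : p ≤ 1) (Ki : Ω → ℕ) (hKmeas : Measurable Ki)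
    (hKpmf : ∀ k, 1 ≤ k → μ {ω | Ki ω = k} = ENNReal.ofReal (p * (1 - p) ^ (k - 1))) :
    μ {ω | Ki ω = 0} = 0 := by
  have hpart : (1 : ℝ≥0∞) = ∑' k : ℕ, μ (Ki ⁻¹' {k}) := by
    rw [← measure_iUnion (fun i j hij => Set.disjoint_left.mpr
        (fun ω h1 h2 => hij (h1.symm.trans h2)))
      (fun k => hKmeas (measurableSet_singleton k))]
    rw [show (⋃ k : ℕ, Ki ⁻¹' {k}) = Set.univ from Set.eq_univ_of_forall
        (fun ω => Set.mem_iUnion.mpr ⟨Ki ω, rfl⟩), measure_univ]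
  rw [tsum_eq_zero_add' ENNReal.summable] at hpart
  have h2 : ∑' (n : ℕ), μ (Ki ⁻¹' {n + 1}) = 1 := by
    rw [show (fun n : ℕ => μ (Ki ⁻¹' {n + 1}))
        = fun n : ℕ => ENNReal.ofReal (p * (1-p)^n) from funext fun n => by
          rw [show Ki ⁻¹' {n+1} = {ω | Ki ω = n+1} from rfl, hKpmf (n+1) (by omega)]
          simp]
    exact geom_total p hp0 hp1
  rw [h2] at hpart
  have h3 : μ (Ki ⁻¹' {0}) + 1 = 0 + 1 := by rw [zero_add, ← hpart]
  exact (ENNReal.add_left_inj (by norm_num)).mp h3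

lemma nb_pmf {Ω : Type*} [MeasurableSpace Ω] (μ : Measure Ω) [IsProbabilityMeasure μ]
    (p : ℝ) (hp0 : 0 < p) (hp1 : p ≤ 1)
    (H : Ω → ℕ) (K : ℕ → Ω → ℕ) (hHmeas : Measurable H) (hKmeas : ∀ i, Measurable (K i))
    (hKpmf : ∀ i k, 1 ≤ k → μ {ω | K i ω = k} = ENNReal.ofReal (p * (1 - p) ^ (k - 1)))
    (hIndep : iIndepFun (fun o : Option ℕ => Option.elim o H K) μ) :
    ∀ h, 1 ≤ h → ∀ k, μ {ω | (∑ i ∈ Finset.range h, K i ω) = k}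
      = if k = 0 then 0
        else ENNReal.ofReal (((k-1).choose (h-1) : ℝ) * p^h * (1-p)^(k-h)) := by
  have hp1' : (0:ℝ) ≤ 1 - p := by linarith
  have hXmeas : ∀ o : Option ℕ, Measurable (Option.elim o H K) := by
    rintro (_|i); exacts [hHmeas, hKmeas i]
  have hK0 : ∀ i, μ {ω | K i ω = 0} = 0 :=
    fun i => K_zero μ p hp0 hp1 (K i) (hKmeas i) (hKpmf i)
  intro h hh
  induction h, hh using Nat.le_induction with
  | base =>
    intro k
    rcases Nat.eq_zero_or_pos k with rfl | hk
    · simpa [Finset.sum_range_one] using hK0 0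
    · rw [if_neg (by omega)]
      simp only [Finset.sum_range_one]
      rw [hKpmf 0 k hk]
      congr 1
      simp [Nat.choose_zero_right]
  | succ h hh ih =>
    intro k
    have hind : IndepFun (fun ω => ∑ i ∈ Finset.range h, K i ω) (K h) μ := by
      have hne : (some h) ∉ (Finset.range h).map ⟨some, Option.some_injective ℕ⟩ := by
        simp [Finset.mem_map]
      have := hIndep.indepFun_finsetSum_of_notMem hXmeas hne
      have hsum : (∑ j ∈ (Finset.range h).map ⟨some, Option.some_injective ℕ⟩,
          Option.elim j H K) = fun ω => ∑ i ∈ Finset.range h, K i ω := by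
        funext ω
        rw [Finset.sum_apply, Finset.sum_map]
        rfl
      rwa [hsum] at this
    have hstep : {ω | (∑ i ∈ Finset.range (h+1), K i ω) = k}
        = {ω | (∑ i ∈ Finset.range h, K i ω) + K h ω = k} := by
      ext ω; simp [Finset.sum_range_succ]
    rw [hstep, add_pmf μ _ _ (by exact Finset.measurable_sum _ fun i _ => hKmeas i)
      (hKmeas h) hind k]
    rcases Nat.eq_zero_or_pos k with rfl | hk
    · rw [if_pos rfl]
      rw [show (0:ℕ)+1 = 1 from rfl, Finset.range_one, Finset.sum_singleton,
        ih 0, if_pos rfl, zero_mul]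
    · rw [if_neg (by omega)]
      rw [← Finset.sum_subset (s₁ := Finset.Icc 1 (k-1))
          (by intro j hj; simp only [Finset.mem_Icc, Finset.mem_range] at *; omega)
          (by intro j hj hj'
              simp only [Finset.mem_Icc, Finset.mem_range] at hj hj'
              rcases (by omega : j = 0 ∨ j = k) with rfl | rfl
              · rw [ih 0, if_pos rfl, zero_mul]
              · rw [Nat.sub_self, hK0 h, mul_zero])]
      have hterm : ∀ j ∈ Finset.Icc 1 (k-1),
          μ {ω | (∑ i ∈ Finset.range h, K i ω) = j} * μ {ω | K h ω = k - j}
          = ENNReal.ofReal (((j-1).choose (h-1) : ℝ) * p^h * (1-p)^(j-h) *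
              (p * (1-p)^(k-j-1))) := by
        intro j hj
        simp only [Finset.mem_Icc] at hj
        rw [ih j, if_neg (by omega), hKpmf h (k-j) (by omega),
          ← ENNReal.ofReal_mul (by positivity)]
      rw [Finset.sum_congr rfl hterm, ← ENNReal.ofReal_sum_of_nonneg
        (fun j hj => by positivity)]
      rw [nb_conv p h k hh hk]
      norm_num

lemma g_pmf {Ω : Type*} [MeasurableSpace Ω] (μ : Measure Ω) [IsProbabilityMeasure μ]
    (p q C : ℝ) (hp0 : 0 < p) (hp1 : p ≤ 1) (hq0 : 0 ≤ q) (hC : 0 ≤ C)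
    (hmax : ℕ) (hhmax : 1 ≤ hmax)
    (H : Ω → ℕ) (K : ℕ → Ω → ℕ) (hHmeas : Measurable H) (hKmeas : ∀ i, Measurable (K i))
    (hHrange : ∀ ω, H ω ∈ Finset.Icc 1 hmax)
    (hHpmf : ∀ h ∈ Finset.Icc 1 hmax,
      μ {ω | H ω = h} = ENNReal.ofReal (C * q ^ (h - 1)))
    (hKpmf : ∀ i k, 1 ≤ k → μ {ω | K i ω = k} = ENNReal.ofReal (p * (1 - p) ^ (k - 1)))
    (hIndep : iIndepFun (fun o : Option ℕ => Option.elim o H K) μ) :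
    ∀ k, μ {ω | (∑ i ∈ Finset.range (H ω), K i ω) = k}
      = if k = 0 then 0
        else ENNReal.ofReal (C * ∑ h ∈ Finset.Icc 1 (min k hmax),
          (((k-1).choose (h-1) : ℝ) * p^h * (1-p)^(k-h) * q^(h-1))) := by
  have hp1' : (0:ℝ) ≤ 1 - p := by linarith
  have hXmeas : ∀ o : Option ℕ, Measurable (Option.elim o H K) := by
    rintro (_|i); exacts [hHmeas, hKmeas i]
  have hNB := nb_pmf μ p hp0 hp1 H K hHmeas hKmeas hKpmf hIndep
  have hindHS : ∀ h : ℕ, IndepFun H (fun ω => ∑ i ∈ Finset.range h, K i ω) μ := by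
    intro h
    have hne : (none : Option ℕ) ∉ (Finset.range h).map ⟨some, Option.some_injective ℕ⟩ := by
      simp [Finset.mem_map]
    have h1 := hIndep.indepFun_finsetSum_of_notMem hXmeas hne
    have hsum : (∑ j ∈ (Finset.range h).map ⟨some, Option.some_injective ℕ⟩,
        Option.elim j H K) = fun ω => ∑ i ∈ Finset.range h, K i ω := by
      funext ω; rw [Finset.sum_apply, Finset.sum_map]; rfl
    rw [hsum] at h1
    exact h1.symm
  intro k
  have hset : {ω | (∑ i ∈ Finset.range (H ω), K i ω) = k}
      = ⋃ h ∈ (Finset.Icc 1 hmax : Finset ℕ),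
          (H ⁻¹' {h} ∩ (fun ω => ∑ i ∈ Finset.range h, K i ω) ⁻¹' {k}) := by
    ext ω
    simp only [Set.mem_setOf_eq, Set.mem_iUnion, Set.mem_inter_iff, Set.mem_preimage,
      Set.mem_singleton_iff, exists_prop]
    constructor
    · intro hω; exact ⟨H ω, hHrange ω, rfl, hω⟩
    · rintro ⟨h, hh, h1, h2⟩; rw [← h1] at h2; exact h2
  have hmeasure : μ {ω | (∑ i ∈ Finset.range (H ω), K i ω) = k}
      = ∑ h ∈ Finset.Icc 1 hmax,
          μ (H ⁻¹' {h}) * μ ((fun ω => ∑ i ∈ Finset.range h, K i ω) ⁻¹' {k}) := by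
    rw [hset, measure_biUnion_finset ?_ ?_]
    · exact Finset.sum_congr rfl fun h hh =>
        (hindHS h).measure_inter_preimage_eq_mul _ _ (measurableSet_singleton _)
          (measurableSet_singleton _)
    · intro i hi j hj hij
      refine Set.disjoint_left.mpr fun ω hωi hωj => hij (hωi.1.symm.trans hωj.1)
    · intro h hh
      exact (hHmeas (measurableSet_singleton _)).inter
        ((Finset.measurable_sum _ fun i _ => hKmeas i) (measurableSet_singleton _))
  rw [hmeasure]
  rcases Nat.eq_zero_or_pos k with rfl | hk
  · rw [if_pos rfl]
    refine Finset.sum_eq_zero fun h hh => ?_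
    simp only [Finset.mem_Icc] at hh
    have := hNB h hh.1 0
    rw [if_pos rfl] at this
    rw [show ((fun ω => ∑ i ∈ Finset.range h, K i ω) ⁻¹' {0})
        = {ω | (∑ i ∈ Finset.range h, K i ω) = 0} from rfl, this, mul_zero]
  · rw [if_neg (by omega)]
    have hterm : ∀ h ∈ Finset.Icc 1 hmax,
        μ (H ⁻¹' {h}) * μ ((fun ω => ∑ i ∈ Finset.range h, K i ω) ⁻¹' {k})
        = ENNReal.ofReal ((C * q^(h-1)) *
            (((k-1).choose (h-1) : ℝ) * p^h * (1-p)^(k-h))) := by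
      intro h hh
      have hh' := Finset.mem_Icc.mp hh
      rw [show (H ⁻¹' {h}) = {ω | H ω = h} from rfl, hHpmf h hh,
        show ((fun ω => ∑ i ∈ Finset.range h, K i ω) ⁻¹' {k})
          = {ω | (∑ i ∈ Finset.range h, K i ω) = k} from rfl,
        hNB h hh'.1 k, if_neg (by omega), ← ENNReal.ofReal_mul (by positivity)]
    rw [Finset.sum_congr rfl hterm]
    rw [← Finset.sum_subset (s₁ := Finset.Icc 1 (min k hmax))
        (by intro h hh; simp only [Finset.mem_Icc] at *; omega)
        (by intro h hh hh'
            simp only [Finset.mem_Icc] at hh hh'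
            have hlt : k - 1 < h - 1 := by omega
            rw [Nat.choose_eq_zero_of_lt hlt]
            norm_num)]
    rw [← ENNReal.ofReal_sum_of_nonneg (fun h hh => by positivity)]
    congr 1
    rw [Finset.mul_sum]
    exact Finset.sum_congr rfl fun h hh => by ring

lemma density_eq (a a' a'' β C : ℝ) (ha : 0 < a) (ha' : 0 < a') (ha'' : 0 ≤ a'')
    (hβ : 0 < β) (hC : 0 ≤ C) (inner : ℕ → ℝ) (hinner : ∀ k, 0 ≤ inner k)
    (w : ℕ → ℝ≥0∞) (hw0 : w 0 = 0)
    (hw : ∀ k, 1 ≤ k → w k = ENNReal.ofReal (C * inner k)) (y : ℝ) :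
    ∑' k : ℕ, w k * (ENNReal.ofReal (1/a) * exponentialPDF β ((y - (a'*k+a''))/a))
    = ENNReal.ofReal (if y < a' + a'' then 0 else
        (C / a) * ∑ k ∈ Finset.Icc 1 ⌊(y - a'') / a'⌋₊,
          β * Real.exp (-β * (y - a'' - a' * k) / a) * inner k) := by
  by_cases hy : y < a' + a''
  · rw [if_pos hy, ENNReal.ofReal_zero]
    refine (ENNReal.summable.tsum_eq_zero_iff).mpr fun k => ?_
    rcases Nat.eq_zero_or_pos k with rfl | hk
    · rw [hw0, zero_mul]
    · have hneg : (y - (a'*k+a''))/a < 0 := by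
        apply div_neg_of_neg_of_pos _ ha
        have : a' * 1 ≤ a' * k := by
          apply mul_le_mul_of_nonneg_left _ ha'.le
          exact_mod_cast hk
        simp only [mul_one] at this
        linarith
      rw [exponentialPDF_of_neg hneg, mul_zero, mul_zero]
  · rw [if_neg hy]
    push_neg at hy
    have h0 : (0:ℝ) ≤ y - a'' := by linarith
    have h0' : (0:ℝ) ≤ (y - a'')/a' := div_nonneg h0 ha'.le
    rw [tsum_eq_sum (s := Finset.Icc 1 ⌊(y - a'') / a'⌋₊) ?_]
    · have hterm : ∀ k ∈ Finset.Icc 1 ⌊(y - a'') / a'⌋₊,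
          w k * (ENNReal.ofReal (1/a) * exponentialPDF β ((y - (a'*k+a''))/a))
          = ENNReal.ofReal (C * inner k * (1/a)
              * (β * Real.exp (-(β * ((y - (a'*k+a''))/a))))) := by
        intro k hk
        simp only [Finset.mem_Icc] at hk
        have hle : (k:ℝ) ≤ (y - a'')/a' := (Nat.le_floor_iff h0').mp hk.2
        have hge : (0:ℝ) ≤ (y - (a'*k+a''))/a := by
          apply div_nonneg _ ha.le
          have : a' * k ≤ y - a'' := by
            rw [mul_comm]
            exact (le_div_iff₀ ha').mp hle
          linarith
        rw [hw k hk.1, exponentialPDF_of_nonneg hge,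
          ← ENNReal.ofReal_mul (by positivity),
          ← ENNReal.ofReal_mul (mul_nonneg hC (hinner k))]
        ring_nf
      rw [Finset.sum_congr rfl hterm,
        ← ENNReal.ofReal_sum_of_nonneg (fun k hk => by
          have := hinner k; positivity)]
      congr 1
      rw [Finset.mul_sum]
      refine Finset.sum_congr rfl fun k hk => ?_
      have harg : -(β * ((y - (a'*k+a''))/a)) = -β * (y - a'' - a' * k) / a := by ring
      rw [harg]; ring
    · intro k hk
      simp only [Finset.mem_Icc, not_and_or, not_le] at hk
      rcases hk with hk | hk
      · interval_cases k
        rw [hw0, zero_mul]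
      · have hlt : (y - a'')/a' < k := by
          by_contra hcon
          push_neg at hcon
          exact absurd (Nat.le_floor hcon) (by omega)
        have hneg : (y - (a'*k+a''))/a < 0 := by
          apply div_neg_of_neg_of_pos _ ha
          have : y - a'' < a' * k := by
            rw [mul_comm]
            exact (div_lt_iff₀ ha').mp hlt
          linarith
        rw [exponentialPDF_of_neg hneg, mul_zero, mul_zero]

/-- Proposition 3 (distribution part): the energy cost `c = a·f + a′·g + a″`, with
`f` exponential of rate `β` independent of `(H, (K_i))` and `g = ∑_{i=1}^{H} K_i`
the transmission time (`P(H = h) = C·q^{h-1}` on `{1,…,h_max}`, `K_i` i.i.d.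
geometric with parameter `p` independent of `H`), has law absolutely continuous
with respect to Lebesgue measure, with the stated density: for `x ≥ a′ + a″`,
`f_c(x) = (C/a)·∑_{k=1}^{⌊(x-a″)/a′⌋} β e^{-β(x-a″-a′k)/a}·
  ∑_{h=1}^{min(k,h_max)} C(k-1,h-1) p^h (1-p)^{k-h} q^{h-1}`,
and `f_c(x) = 0` for `x < a′ + a″`. -/
theorem cost_density {Ω : Type*} [MeasurableSpace Ω]
    (μ : Measure Ω) [IsProbabilityMeasure μ]
    (a a' a'' β p q C : ℝ) (ha : 0 < a) (ha' : 0 < a') (ha'' : 0 ≤ a'') (hβ : 0 < β)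
    (hp0 : 0 < p) (hp1 : p ≤ 1) (hq0 : 0 ≤ q) (hq1 : q < 1) (hC : 0 ≤ C)
    (hmax : ℕ) (hhmax : 1 ≤ hmax)
    (H : Ω → ℕ) (K : ℕ → Ω → ℕ) (f : Ω → ℝ)
    (hHmeas : Measurable H) (hKmeas : ∀ i, Measurable (K i)) (hfmeas : Measurable f)
    (hHrange : ∀ ω, H ω ∈ Finset.Icc 1 hmax)
    (hHpmf : ∀ h ∈ Finset.Icc 1 hmax,
      μ {ω | H ω = h} = ENNReal.ofReal (C * q ^ (h - 1)))
    (hKpmf : ∀ i k, 1 ≤ k →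
      μ {ω | K i ω = k} = ENNReal.ofReal (p * (1 - p) ^ (k - 1)))
    (hIndep : iIndepFun
      (fun o : Option ℕ => Option.elim o H K) μ)
    (hfexp : Measure.map f μ = volume.withDensity (exponentialPDF β))
    (hfIndep : IndepFun f
      (fun ω => fun o : Option ℕ => Option.elim o (H ω) (fun i => K i ω)) μ) :
    Measure.map
        (fun ω => a * f ω + a' * ((∑ i ∈ Finset.range (H ω), K i ω : ℕ) : ℝ) + a'') μ =
      volume.withDensity (fun x => ENNReal.ofReal
        (if x < a' + a'' then 0 else
          (C / a) * ∑ k ∈ Finset.Icc 1 ⌊(x - a'') / a'⌋₊,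
            β * Real.exp (-β * (x - a'' - a' * k) / a) *
              ∑ h ∈ Finset.Icc 1 (min k hmax),
                ((k - 1).choose (h - 1) : ℝ) * p ^ h * (1 - p) ^ (k - h) * q ^ (h - 1))) := by
  -- notation
  set g : Ω → ℕ := fun ω => ∑ i ∈ Finset.range (H ω), K i ω with hg_def
  -- measurability of g
  have hgmeas : Measurable g := by
    apply measurable_to_countable'
    intro n
    have : g ⁻¹' {n} = ⋃ h : ℕ, (H ⁻¹' {h} ∩ (fun ω => ∑ i ∈ Finset.range h, K i ω) ⁻¹' {n}) := by
      ext ω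
      simp only [Set.mem_preimage, Set.mem_singleton_iff, Set.mem_iUnion, Set.mem_inter_iff]
      constructor
      · intro hω; exact ⟨H ω, rfl, hω⟩
      · rintro ⟨h, h1, h2⟩; rw [hg_def]; simp only [← h1] at h2 ⊢; exact h2
    rw [this]
    exact MeasurableSet.iUnion fun h => (hHmeas (measurableSet_singleton _)).inter
      ((Finset.measurable_sum _ fun i _ => hKmeas i) (measurableSet_singleton _))
  -- independence of f and g
  have hφmeas : Measurable fun v : Option ℕ → ℕ => ∑ i ∈ Finset.range (v none), v (some i) := by
    apply measurable_to_countable'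
    intro n
    have : (fun v : Option ℕ → ℕ => ∑ i ∈ Finset.range (v none), v (some i)) ⁻¹' {n}
        = ⋃ h : ℕ, ((fun v : Option ℕ → ℕ => v none) ⁻¹' {h}
            ∩ (fun v : Option ℕ → ℕ => ∑ i ∈ Finset.range h, v (some i)) ⁻¹' {n}) := by
      ext v
      simp only [Set.mem_preimage, Set.mem_singleton_iff, Set.mem_iUnion, Set.mem_inter_iff]
      constructor
      · intro hv; exact ⟨v none, rfl, hv⟩
      · rintro ⟨h, h1, h2⟩; rw [← h1] at h2; exact h2
    rw [this]
    exact MeasurableSet.iUnion fun h =>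
      ((measurable_pi_apply none) (measurableSet_singleton _)).inter
        ((Finset.measurable_sum _ fun i _ => measurable_pi_apply (some i))
          (measurableSet_singleton _))
  have hfg : IndepFun f g μ := by
    have := hfIndep.comp measurable_id hφmeas
    exact this
  -- measurability of the cost
  have hcmeas : Measurable fun ω => a * f ω + a' * ((g ω : ℕ) : ℝ) + a'' := by
    have : Measurable fun ω => ((g ω : ℕ) : ℝ) := measurable_from_top.comp hgmeas
    fun_prop
  -- law of g
  have hgpmf := g_pmf μ p q C hp0 hp1 hq0 hC hmax hhmax H K hHmeas hKmeas hHrange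
    hHpmf hKpmf hIndep
  -- the weights
  set w : ℕ → ℝ≥0∞ := fun k => μ (g ⁻¹' {k}) with hw_def
  have hw0 : w 0 = 0 := by
    rw [hw_def]
    have := hgpmf 0
    rw [if_pos rfl] at this
    exact this
  have hw : ∀ k, 1 ≤ k → w k = ENNReal.ofReal (C * ∑ h ∈ Finset.Icc 1 (min k hmax),
      (((k-1).choose (h-1) : ℝ) * p^h * (1-p)^(k-h) * q^(h-1))) := by
    intro k hk
    rw [hw_def]
    have := hgpmf k
    rwa [if_neg (by omega)] at this
  -- measurable density pieces
  have hexpmeas : Measurable (exponentialPDF β) :=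
    (measurable_exponentialPDFReal β).ennreal_ofReal
  set ρ : ℕ → ℝ → ℝ≥0∞ := fun k y =>
    w k * (ENNReal.ofReal (1/a) * exponentialPDF β ((y - (a'*k+a''))/a)) with hρ_def
  have hρmeas : ∀ k, Measurable (ρ k) := by
    intro k
    apply Measurable.const_mul
    apply Measurable.const_mul
    exact hexpmeas.comp (by fun_prop)
  -- nonnegativity of inner sums
  have hinner : ∀ k : ℕ, 0 ≤ ∑ h ∈ Finset.Icc 1 (min k hmax),
      (((k-1).choose (h-1) : ℝ) * p^h * (1-p)^(k-h) * q^(h-1)) := by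
    intro k
    apply Finset.sum_nonneg
    intro h hh
    have h1p : (0:ℝ) ≤ 1 - p := by linarith
    positivity
  -- pointwise density identity
  have hpoint : (fun y : ℝ => ∑' k : ℕ, ρ k y)
      = fun x => ENNReal.ofReal (if x < a' + a'' then 0 else
          (C / a) * ∑ k ∈ Finset.Icc 1 ⌊(x - a'') / a'⌋₊,
            β * Real.exp (-β * (x - a'' - a' * k) / a) *
              ∑ h ∈ Finset.Icc 1 (min k hmax),
                ((k - 1).choose (h - 1) : ℝ) * p ^ h * (1 - p) ^ (k - h) * q ^ (h - 1)) := by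
    funext y
    exact density_eq a a' a'' β C ha ha' ha'' hβ hC _ hinner w hw0 hw y
  rw [← hpoint]
  -- now compare measures
  ext s hs
  rw [Measure.map_apply hcmeas hs,
    withDensity_apply _ hs, lintegral_tsum (fun k => (hρmeas k).aemeasurable)]
  -- decompose the preimage
  have hpre : (fun ω => a * f ω + a' * ((g ω : ℕ) : ℝ) + a'') ⁻¹' s
      = ⋃ k : ℕ, (f ⁻¹' ((fun x => a*x + (a'*k+a'')) ⁻¹' s) ∩ g ⁻¹' {k}) := by
    ext ω
    simp only [Set.mem_preimage, Set.mem_iUnion, Set.mem_inter_iff, Set.mem_singleton_iff]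
    constructor
    · intro hω
      refine ⟨g ω, ?_, rfl⟩
      show a * f ω + (a' * (g ω : ℝ) + a'') ∈ s
      convert hω using 1
      ring
    · rintro ⟨k, h1, h2⟩
      have h1' : a * f ω + (a' * (k : ℝ) + a'') ∈ s := h1
      rw [h2]
      convert h1' using 1
      ring
  rw [hpre, measure_iUnion ?_ ?_]
  · congr 1
    funext k
    have hφk : Measurable fun x : ℝ => a*x + (a'*(k:ℝ)+a'') := by fun_prop
    have hsk : MeasurableSet ((fun x => a*x + (a'*(k:ℝ)+a'')) ⁻¹' s) := hφk hs
    rw [hfg.measure_inter_preimage_eq_mul _ _ hsk (measurableSet_singleton k),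
      ← Measure.map_apply hfmeas hsk, hfexp, withDensity_apply _ hsk,
      affine_lintegral (exponentialPDF β) hexpmeas ha hs, mul_comm]
    rw [hρ_def]
    simp only []
    rw [← lintegral_const_mul' _ _ (measure_ne_top μ _)]
  · -- pairwise disjoint
    intro i j hij
    refine Set.disjoint_left.mpr fun ω hωi hωj => hij ?_
    simp only [Set.mem_inter_iff, Set.mem_preimage, Set.mem_singleton_iff] at hωi hωj
    rw [← hωi.2, ← hωj.2]
  · intro k
    exact (hfmeas ((by fun_prop : Measurable fun x : ℝ => a*x + (a'*(k:ℝ)+a'')) hs)).inter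
      (hgmeas (measurableSet_singleton k))
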